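/- Let (Ω, F, P) be a discrete probability space with filtration (F_n : 0 ≤ n ≤ N), each F_n atomic with atoms of positive probability and F_0 = {∅, Ω}. Define π on the product space ⨂_{n=1}^{N} ⨂_{A ∈ at(F_{n−1})} (A, F_n ∩ A, P_A) by π(φ_1, …, φ_N) = φ_N(φ_{N−1}(⋯φ_1(Ω)⋯)), where each φ_n maps atoms of F_{n−1} to atoms of F_n contained in them, coordinate A distributed as P_A. Then for every atom A_N of F_N with ancestor chain A_0 = Ω ⊇ A_1 ⊇ ⋯ ⊇ A_N (A_n ∈ at(F_n)), the measure of π⁻¹(A_N) equals P(A_0) · ∏_{n=1}^{N} P(A_n)/P(A_{n−1}) = P(A_N). Consequently π is measure-preserving and π⁻¹(U) is measurable with respect to the canonical filtration at level n for every U ∈ F_n. -/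

import Mathlib

open MeasureTheory

/-- The one-parameter construction: for an atomic filtration `F n = σ(a n)` on a discrete
probability space (with `F 0` trivial), the iterated evaluation map
`π (φ₁, …, φ_N) = φ_N(φ_{N-1}(⋯ φ₁(Ω) ⋯))` on the product
`⨂_{n=1}^N ⨂_{A ∈ at F_{n-1}} (A, F_n ∩ A, P_A)` satisfies: the preimage of an atom `A_N`
with ancestor chain `A_0 = Ω ⊇ A_1 ⊇ ⋯ ⊇ A_N` has measure
`P(A_0) ∏_{n=1}^N P(A_n)/P(A_{n-1}) = P(A_N)`; consequently `π` is measure-preserving and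
`π⁻¹(U)` is measurable for the canonical filtration at level `n` whenever `U ∈ F n`. -/
theorem iterated_evaluation_measure_preserving
    {Ω : Type*} {m : MeasurableSpace Ω} (P : Measure Ω) [IsProbabilityMeasure P]
    [Countable Ω] [MeasurableSingletonClass Ω]
    (N : ℕ)
    (ι : ℕ → Type) [∀ n, Countable (ι n)]
    [∀ n, MeasurableSpace (ι n)] [∀ n, MeasurableSingletonClass (ι n)]
    (a : (n : ℕ) → ι n → Set Ω)
    -- each level is a countable partition into atoms of positive measure
    (ha_disj : ∀ n, Pairwise (Function.onFun Disjoint (a n)))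
    (ha_cover : ∀ n, (⋃ i, a n i) = Set.univ)
    (ha_ne : ∀ n i, (a n i).Nonempty)
    (ha_pos : ∀ n i, 0 < P (a n i))
    -- the filtration generated by the atoms
    (F : ℕ → MeasurableSpace Ω)
    (hF : ∀ n, F n = MeasurableSpace.generateFrom (Set.range (a n)))
    (hF_mono : ∀ n, F n ≤ F (n + 1)) (hF_le : ∀ n, F n ≤ m)
    -- `F 0` is trivial: its unique atom is `Ω`
    (i0 : ι 0) (h0 : ∀ i : ι 0, a 0 i = Set.univ)
    -- conditional measures: coordinate `(n, i)` is distributed as `P_{a n i}` on atoms of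
    -- `F (n+1)` inside `a n i`
    (ν : (n : ℕ) → ι n → Measure (ι (n + 1)))
    (hν : ∀ n i j, ν n i {j} = P (a n i ∩ a (n + 1) j) / P (a n i))
    -- the product measure, characterized on finite cylinders
    (μprod : Measure ((n : ℕ) → ι n → ι (n + 1)))
    (hμprod : ∀ (s : Finset ((n : ℕ) × ι n)) (t : (p : (n : ℕ) × ι n) → Set (ι (p.1 + 1))),
      μprod {φ | ∀ p ∈ s, φ p.1 p.2 ∈ t p} = ∏ p ∈ s, ν p.1 p.2 (t p)) :
    -- `iter φ n` is the atom-index reached after `n` steps of the iterated evaluation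
    let iter : ((n : ℕ) → ι n → ι (n + 1)) → (n : ℕ) → ι n := fun φ n =>
      Nat.rec (motive := fun k => ι k) i0 (fun k j => φ k j) n
    -- the canonical filtration on the product space
    let G : ℕ → MeasurableSpace ((n : ℕ) → ι n → ι (n + 1)) := fun n =>
      MeasurableSpace.comap
        (fun φ => fun p : {p : (k : ℕ) × ι k // p.1 < n} => φ p.1.1 p.1.2) inferInstance
    -- preimages of atoms have the right (telescoping) measure
    (∀ c : (n : ℕ) → ι n, c 0 = i0 →
      (∀ n < N, a (n + 1) (c (n + 1)) ⊆ a n (c n)) →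
      μprod {φ | iter φ N = c N}
          = P (a 0 (c 0)) * ∏ n ∈ Finset.range N, P (a (n + 1) (c (n + 1))) / P (a n (c n)) ∧
      μprod {φ | iter φ N = c N} = P (a N (c N))) ∧
    -- `π` is measure-preserving
    (∀ U : Set Ω, MeasurableSet[F N] U → μprod {φ | a N (iter φ N) ⊆ U} = P U) ∧
    -- `π⁻¹(U)` is measurable at level `n` of the canonical filtration, for `U ∈ F n`
    (∀ n ≤ N, ∀ U : Set Ω, MeasurableSet[F n] U →
      MeasurableSet[G n] {φ | a n (iter φ n) ⊆ U}) := by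
  classical
  intro iter G
  -- basic facts
  have hΩne : (Set.univ : Set Ω).Nonempty := by rw [← h0 i0]; exact ha_ne 0 i0
  have hι0 : ∀ i : ι 0, i = i0 := by
    intro i; by_contra h
    have hd : Disjoint (a 0 i) (a 0 i0) := ha_disj 0 h
    rw [h0 i, h0 i0, Set.disjoint_iff_inter_eq_empty, Set.univ_inter] at hd
    exact hΩne.ne_empty hd
  have hiterS : ∀ (φ : (n : ℕ) → ι n → ι (n + 1)) n, iter φ (n + 1) = φ n (iter φ n) :=
    fun _ _ => rfl
  have hΩmeas : ∀ s : Set Ω, MeasurableSet s := fun s => s.to_countable.measurableSet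
  have hmeas_eval : ∀ (n : ℕ) (i : ι n),
      Measurable fun φ : (n : ℕ) → ι n → ι (n + 1) => φ n i :=
    fun n i => (measurable_pi_apply i).comp (measurable_pi_apply n)
  have hmeas_iter : ∀ n (j : ι n), MeasurableSet {φ : (n : ℕ) → ι n → ι (n + 1) | iter φ n = j} := by
    intro n
    induction n with
    | zero =>
      intro j
      have : {φ : (n : ℕ) → ι n → ι (n + 1) | iter φ 0 = j} = Set.univ := by
        ext φ
        simp only [Set.mem_setOf_eq, Set.mem_univ, iff_true]
        exact (hι0 (iter φ 0)).trans (hι0 j).symm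
      rw [this]; exact MeasurableSet.univ
    | succ n ih =>
      intro j
      have : {φ : (n : ℕ) → ι n → ι (n + 1) | iter φ (n + 1) = j}
          = ⋃ i, ({φ | iter φ n = i} ∩ {φ | φ n i = j}) := by
        ext φ
        simp only [Set.mem_setOf_eq, Set.mem_iUnion, Set.mem_inter_iff]
        exact ⟨fun h => ⟨iter φ n, rfl, h⟩, fun ⟨i, h1, h2⟩ => by rw [hiterS, h1]; exact h2⟩
      rw [this]
      exact MeasurableSet.iUnion fun i =>
        (ih i).inter (hmeas_eval n i (measurableSet_singleton j))
  have hcyl_meas : ∀ (s : Finset ((k : ℕ) × ι k)) (t : (p : (k : ℕ) × ι k) → Set (ι (p.1 + 1))),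
      MeasurableSet {φ : (n : ℕ) → ι n → ι (n + 1) | ∀ p ∈ s, φ p.1 p.2 ∈ t p} := by
    intro s t
    have : {φ : (n : ℕ) → ι n → ι (n + 1) | ∀ p ∈ s, φ p.1 p.2 ∈ t p}
        = ⋂ p ∈ s, (fun φ : (n : ℕ) → ι n → ι (n + 1) => φ p.1 p.2) ⁻¹' t p := by
      ext φ; simp [Set.mem_setOf_eq]
    rw [this]
    exact MeasurableSet.biInter s.countable_toSet fun p _ =>
      hmeas_eval p.1 p.2 (t p).to_countable.measurableSet
  -- the key computation
  have key : ∀ n (s : Finset ((k : ℕ) × ι k)) (t : (p : (k : ℕ) × ι k) → Set (ι (p.1 + 1))),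
      (∀ p ∈ s, n ≤ p.1) → ∀ i : ι n,
      μprod ({φ | iter φ n = i} ∩ {φ | ∀ p ∈ s, φ p.1 p.2 ∈ t p})
        = P (a n i) * ∏ p ∈ s, ν p.1 p.2 (t p) := by
    intro n
    induction n with
    | zero =>
      intro s t _ i
      have h1 : {φ : (n : ℕ) → ι n → ι (n + 1) | iter φ 0 = i} = Set.univ := by
        ext φ
        simp only [Set.mem_setOf_eq, Set.mem_univ, iff_true]
        exact (hι0 (iter φ 0)).trans (hι0 i).symm
      have h2 : P (a 0 i) = 1 := by rw [h0 i]; exact measure_univ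
      rw [h1, Set.univ_inter, hμprod s t, h2, one_mul]
    | succ n ih =>
      intro s t hs j
      have hns : ∀ i : ι n, (⟨n, i⟩ : (k : ℕ) × ι k) ∉ s := by
        intro i hmem
        simpa using hs _ hmem
      -- updated cylinder data
      have t' : ι n → (p : (k : ℕ) × ι k) → Set (ι (p.1 + 1)) :=
        fun i => Function.update t ⟨n, i⟩ ({j} : Set (ι (n + 1)))
      have hset : {φ : (n : ℕ) → ι n → ι (n + 1) | iter φ (n + 1) = j}
            ∩ {φ | ∀ p ∈ s, φ p.1 p.2 ∈ t p}
          = ⋃ i, ({φ | iter φ n = i} ∩ {φ | ∀ p ∈ insert ⟨n, i⟩ s, φ p.1 p.2 ∈ Function.update t ⟨n, i⟩ ({j} : Set (ι (n + 1))) p}) := by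
        ext φ
        simp only [Set.mem_inter_iff, Set.mem_setOf_eq, Set.mem_iUnion]
        constructor
        · rintro ⟨h1, h2⟩
          refine ⟨iter φ n, rfl, ?_⟩
          intro p hp
          rcases Finset.mem_insert.1 hp with h | h
          · subst h
            rw [Function.update_self]
            exact h1
          · rw [Function.update_of_ne (by rintro rfl; exact hns _ h)]
            exact h2 p h
        · rintro ⟨i, h1, h2⟩
          have hni := h2 ⟨n, i⟩ (Finset.mem_insert_self _ _)
          rw [Function.update_self] at hni
          refine ⟨by rw [hiterS, h1]; exact hni, ?_⟩
          intro p hp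
          have := h2 p (Finset.mem_insert_of_mem hp)
          rwa [Function.update_of_ne (by rintro rfl; exact hns _ hp)] at this
      have hdisjU : Pairwise (Function.onFun Disjoint
          (fun i : ι n => {φ : (n : ℕ) → ι n → ι (n + 1) | iter φ n = i}
            ∩ {φ | ∀ p ∈ insert ⟨n, i⟩ s, φ p.1 p.2 ∈ Function.update t ⟨n, i⟩ ({j} : Set (ι (n + 1))) p})) := by
        intro i i' hne
        refine Set.disjoint_left.2 ?_
        rintro φ ⟨h1, -⟩ ⟨h1', -⟩
        exact hne (h1.symm.trans h1')
      rw [hset, measure_iUnion hdisjU fun i => (hmeas_iter n i).inter (hcyl_meas _ _)]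
      have hterm : ∀ i : ι n,
          μprod ({φ | iter φ n = i} ∩ {φ | ∀ p ∈ insert ⟨n, i⟩ s, φ p.1 p.2 ∈ Function.update t ⟨n, i⟩ ({j} : Set (ι (n + 1))) p})
            = P (a n i ∩ a (n + 1) j) * ∏ p ∈ s, ν p.1 p.2 (t p) := by
        intro i
        rw [ih (insert ⟨n, i⟩ s) (Function.update t ⟨n, i⟩ ({j} : Set (ι (n + 1))))
          (fun p hp => by
            rcases Finset.mem_insert.1 hp with h | h
            · subst h; exact le_refl n
            · exact le_of_lt (Nat.lt_of_succ_le (hs p h)))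
          i]
        rw [Finset.prod_insert (hns i)]
        have hup : Function.update t ⟨n, i⟩ ({j} : Set (ι (n + 1))) ⟨n, i⟩
            = ({j} : Set (ι (n + 1))) := Function.update_self _ _ _
        have hprodeq : ∏ p ∈ s, ν p.1 p.2 (Function.update t ⟨n, i⟩ ({j} : Set (ι (n + 1))) p)
            = ∏ p ∈ s, ν p.1 p.2 (t p) :=
          Finset.prod_congr rfl fun p hp => by
            rw [Function.update_of_ne (by rintro rfl; exact hns _ hp)]
        rw [hup, hprodeq, hν n i j, ← mul_assoc,
          ENNReal.mul_div_cancel (ha_pos n i).ne' (measure_ne_top P _)]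
      rw [tsum_congr hterm, ENNReal.tsum_mul_right]
      congr 1
      have hunion : ⋃ i, (a n i ∩ a (n + 1) j) = a (n + 1) j := by
        rw [← Set.iUnion_inter, ha_cover n, Set.univ_inter]
      conv_rhs => rw [← hunion]
      exact (measure_iUnion
        (fun i i' hne => (ha_disj n hne).mono Set.inter_subset_left Set.inter_subset_left)
        (fun i => hΩmeas _)).symm
  have hA : ∀ n (j : ι n), μprod {φ | iter φ n = j} = P (a n j) := by
    intro n j
    have := key n ∅ (fun p => ∅) (by simp) j
    simpa using this
  -- telescoping
  have tele : ∀ c : (n : ℕ) → ι n, c 0 = i0 → ∀ M,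
      P (a 0 (c 0)) * ∏ n ∈ Finset.range M, P (a (n + 1) (c (n + 1))) / P (a n (c n))
        = P (a M (c M)) := by
    intro c hc0 M
    induction M with
    | zero => simp
    | succ M ihM =>
      rw [Finset.prod_range_succ, ← mul_assoc, ihM,
        ENNReal.mul_div_cancel (ha_pos M (c M)).ne' (measure_ne_top P _)]
  -- dichotomy for atoms
  have dich : ∀ n (U : Set Ω), MeasurableSet[F n] U →
      ∀ j, a n j ⊆ U ∨ a n j ∩ U = ∅ := by
    intro n U hU
    rw [hF n] at hU
    refine MeasurableSpace.generateFrom_induction (Set.range (a n))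
      (fun U _ => ∀ j, a n j ⊆ U ∨ a n j ∩ U = ∅) ?_ ?_ ?_ ?_ U hU
    · rintro t ⟨i, rfl⟩ _ j
      by_cases h : j = i
      · subst h; exact Or.inl subset_rfl
      · exact Or.inr (Set.disjoint_iff_inter_eq_empty.1 (ha_disj n h))
    · intro j; exact Or.inr (Set.inter_empty _)
    · intro t _ iht j
      rcases iht j with h | h
      · exact Or.inr (Set.eq_empty_iff_forall_notMem.2 fun x hx => hx.2 (h hx.1))
      · exact Or.inl fun x hx hxt => Set.eq_empty_iff_forall_notMem.1 h x ⟨hx, hxt⟩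
    · intro f _ ihf j
      by_cases h : ∃ k, a n j ⊆ f k
      · obtain ⟨k, hk⟩ := h
        exact Or.inl (hk.trans (Set.subset_iUnion f k))
      · push_neg at h
        refine Or.inr ?_
        have hk : ∀ k, a n j ∩ f k = ∅ := fun k => ((ihf k) j).resolve_left (h k)
        rw [Set.inter_iUnion]
        simp [hk]
  -- atom decomposition of a measurable set
  have hdecomp : ∀ n (U : Set Ω), MeasurableSet[F n] U →
      U = ⋃ j : {j : ι n // a n j ⊆ U}, a n (j : ι n) := by
    intro n U hU
    apply Set.Subset.antisymm
    · intro x hx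
      have : x ∈ ⋃ i, a n i := by rw [ha_cover n]; trivial
      obtain ⟨i, hi⟩ := Set.mem_iUnion.1 this
      have hsub : a n i ⊆ U := by
        rcases dich n U hU i with h | h
        · exact h
        · exact absurd (Set.mem_inter hi hx) (by rw [h]; exact fun h => h)
      exact Set.mem_iUnion.2 ⟨⟨i, hsub⟩, hi⟩
    · exact Set.iUnion_subset fun j => j.2
  -- preimage description
  have hpre : ∀ n (U : Set Ω),
      {φ : (n : ℕ) → ι n → ι (n + 1) | a n (iter φ n) ⊆ U}
        = ⋃ j : {j : ι n // a n j ⊆ U}, {φ | iter φ n = (j : ι n)} := by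
    intro n U
    ext φ
    simp only [Set.mem_setOf_eq, Set.mem_iUnion]
    exact ⟨fun h => ⟨⟨iter φ n, h⟩, rfl⟩, fun ⟨j, hj⟩ => hj ▸ j.2⟩
  refine ⟨?_, ?_, ?_⟩
  · -- part 1
    intro c hc0 _
    have h2 : μprod {φ | iter φ N = c N} = P (a N (c N)) := hA N (c N)
    exact ⟨by rw [h2, tele c hc0 N], h2⟩
  · -- part 2
    intro U hU
    have h1 : μprod {φ | a N (iter φ N) ⊆ U}
        = ∑' j : {j : ι N // a N j ⊆ U}, μprod {φ | iter φ N = j.1} := by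
      rw [hpre N U]
      exact measure_iUnion
        (fun j j' hne => Set.disjoint_left.2 fun φ h1 h1' =>
          hne (Subtype.ext ((h1 : iter φ N = _).symm.trans h1')))
        (fun j => hmeas_iter N j.1)
    have h2 : P U = ∑' j : {j : ι N // a N j ⊆ U}, P (a N j.1) := by
      conv_lhs => rw [hdecomp N U hU]
      exact measure_iUnion
        (fun j j' hne => ha_disj N (fun h => hne (Subtype.ext h)))
        (fun j => hΩmeas _)
    rw [h1, h2]
    exact tsum_congr fun j => hA N j.1
  · -- part 3
    have hG_le : ∀ k n, k ≤ n → G k ≤ G n := by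
      intro k n hkn
      have hg : Measurable (fun ψ : (p : {p : (l : ℕ) × ι l // p.1 < n}) → ι (p.1.1 + 1) =>
          fun q : {p : (l : ℕ) × ι l // p.1 < k} => ψ ⟨q.1, lt_of_lt_of_le q.2 hkn⟩) :=
        measurable_pi_lambda _ fun q => measurable_pi_apply _
      calc G k = MeasurableSpace.comap
            ((fun ψ : (p : {p : (l : ℕ) × ι l // p.1 < n}) → ι (p.1.1 + 1) =>
              fun q : {p : (l : ℕ) × ι l // p.1 < k} => ψ ⟨q.1, lt_of_lt_of_le q.2 hkn⟩)
              ∘ (fun φ => fun p : {p : (l : ℕ) × ι l // p.1 < n} => φ p.1.1 p.1.2))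
            inferInstance := rfl
        _ = MeasurableSpace.comap
            (fun φ : (n : ℕ) → ι n → ι (n + 1) =>
              fun p : {p : (l : ℕ) × ι l // p.1 < n} => φ p.1.1 p.1.2)
            (MeasurableSpace.comap _ inferInstance) := (MeasurableSpace.comap_comp).symm
        _ ≤ G n := MeasurableSpace.comap_mono hg.comap_le
    have hiterG : ∀ n (j : ι n), MeasurableSet[G n] {φ : (n : ℕ) → ι n → ι (n + 1) | iter φ n = j} := by
      intro n
      induction n with
      | zero =>
        intro j
        have : {φ : (n : ℕ) → ι n → ι (n + 1) | iter φ 0 = j} = Set.univ := by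
          ext φ
          simp only [Set.mem_setOf_eq, Set.mem_univ, iff_true]
          exact (hι0 (iter φ 0)).trans (hι0 j).symm
        rw [this]; exact MeasurableSet.univ
      | succ n ih =>
        intro j
        have hs : {φ : (n : ℕ) → ι n → ι (n + 1) | iter φ (n + 1) = j}
            = ⋃ i, ({φ | iter φ n = i} ∩ {φ | φ n i = j}) := by
          ext φ
          simp only [Set.mem_setOf_eq, Set.mem_iUnion, Set.mem_inter_iff]
          exact ⟨fun h => ⟨iter φ n, rfl, h⟩, fun ⟨i, h1, h2⟩ => by rw [hiterS, h1]; exact h2⟩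
        rw [hs]
        refine MeasurableSet.iUnion fun i => MeasurableSet.inter
          (hG_le n (n + 1) (Nat.le_succ n) _ (ih i)) ?_
        have hev : Measurable fun ψ : (p : {p : (l : ℕ) × ι l // p.1 < n + 1}) → ι (p.1.1 + 1) =>
            ψ ⟨⟨n, i⟩, Nat.lt_succ_self n⟩ := measurable_pi_apply _
        exact MeasurableSpace.measurableSet_comap.2
          ⟨(fun ψ : (p : {p : (l : ℕ) × ι l // p.1 < n + 1}) → ι (p.1.1 + 1) =>
              ψ ⟨⟨n, i⟩, Nat.lt_succ_self n⟩) ⁻¹' {j},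
            hev (measurableSet_singleton j), rfl⟩
    intro n _ U _
    rw [hpre n U]
    exact MeasurableSet.iUnion fun j => hiterG n (j : ι n)
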